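/- There exists a planar S_{2,4}-free graph on 14 vertices with exactly 31 edges. -/

import Mathlib

/-- `G` contains the double star `S_{2,4}`: an edge `x y`, two further neighbors of `x`,
four further neighbors of `y`, all eight vertices distinct. -/
def ContainsS24 {V : Type*} (G : SimpleGraph V) : Prop :=
  ∃ x y a b c d e f : V, G.Adj x y ∧ G.Adj x a ∧ G.Adj x b ∧
    G.Adj y c ∧ G.Adj y d ∧ G.Adj y e ∧ G.Adj y f ∧
    ([x, y, a, b, c, d, e, f] : List V).Nodup

/-- `G` is planar: it admits a drawing in the plane with injective vertex positions,
each edge drawn as a continuous injective arc between the positions of its endpoints,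
arc interiors avoiding all vertex positions, and interiors of distinct edges disjoint. -/
def IsPlanar {V : Type*} (G : SimpleGraph V) : Prop :=
  ∃ (pos : V → ℝ × ℝ) (arc : G.edgeSet → ℝ → ℝ × ℝ),
    Function.Injective pos ∧
    (∀ e, ContinuousOn (arc e) (Set.Icc 0 1)) ∧
    (∀ e, Set.InjOn (arc e) (Set.Icc 0 1)) ∧
    (∀ e : G.edgeSet, ∃ u v, (e : Sym2 V) = s(u, v) ∧ arc e 0 = pos u ∧ arc e 1 = pos v) ∧
    (∀ e, ∀ t ∈ Set.Ioo (0 : ℝ) 1, arc e t ∉ Set.range pos) ∧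
    (∀ e f : G.edgeSet, e ≠ f → ∀ s ∈ Set.Ioo (0 : ℝ) 1, ∀ t ∈ Set.Ioo (0 : ℝ) 1,
      arc e s ≠ arc f t)

namespace S24Cert

def mask : Fin 14 → Nat := ![2198, 4241, 2577, 13632, 647, 9536, 5416, 2579, 12392, 2196, 8296, 645, 330, 1320]

def ev : Fin 31 → Fin 14 × Fin 14 := ![(0, 1), (0, 2), (0, 4), (0, 7), (0, 11), (1, 4), (1, 7), (1, 12), (2, 4), (2, 9), (2, 11), (3, 6), (3, 8), (3, 10), (3, 12), (3, 13), (4, 7), (4, 9), (5, 6), (5, 8), (5, 10), (5, 13), (6, 8), (6, 10), (6, 12), (7, 9), (7, 11), (8, 12), (8, 13), (9, 11), (10, 13)]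

def px : Fin 14 → ℤ := ![45, 50, 46, 42, 47, 102, 61, 43, 46, 46, 49, 45, 52, 5]

def py : Fin 14 → ℤ := ![65, 63, 63, 47, 62, 1, 46, 58, 97, 62, 23, 62, 65, 2]

def pcf : Fin 31 → Fin 31 → ℤ × ℤ × ℤ :=
  ![![(0, 0, 0), (2, 3, -285), (5, 7, -680), (3, 1, -200), (1, 1, -110), (1, 8, -554), (-1, 4, -202), (-4, -3, 389), (2, 5, -411), (2, 5, -411), (2, 5, -411), (1, 19, -1091), (50, -4, -1951), (2, 5, -367), (-9, 5, 139), (2, 5, -367), (4, 10, -819), (4, 10, -819), (-11, 17, -316), (-12, -7, 1136), (2, 80, -3539), (1, 97, -3180), (-17, -5, 1216), (-11, 17, -316), (-19, -9, 1545), (4, 10, -817), (4, 10, -815), (-1, -1, 115), (190, -82, -2003), (4, 10, -817), (2, 80, -3539)],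
    ![(-2, -3, 285), (0, 0, 0), (-5, -3, 420), (9, -1, -340), (5, 1, -290), (-1, 1, -16), (-5, 7, -201), (-1, 0, 48), (-1, 0, 46), (1, 1, -109), (1, 2, -172), (1, 19, -1089), (50, -4, -1951), (1, 4, -264), (-9, 5, 121), (1, 4, -264), (-1, 1, -16), (0, 2, -125), (-15, 17, -124), (-12, -7, 1113), (-6, 80, -3155), (1, 97, -3178), (-17, -5, 1182), (-15, 17, -124), (-3, -1, 211), (0, 2, -125), (1, 1, -108), (-3, -1, 211), (190, -82, -2003), (0, 2, -125), (-6, 80, -3155)],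
    ![(-5, -7, 680), (5, 3, -420), (0, 0, 0), (1, 0, -45), (3, 1, -200), (-4, 1, 126), (-5, 7, -195), (-3, -1, 208), (4, 3, -374), (6, 4, -529), (6, 4, -529), (1, 19, -1080), (50, -4, -1951), (1, 3, -208), (-9, 5, 128), (1, 3, -208), (-1, 6, -325), (1, 1, -109), (-7, 8, -54), (-24, -14, 2229), (-4, 78, -3123), (1, 97, -3130), (-17, -5, 1188), (-7, 8, -54), (-19, -9, 1512), (6, 4, -527), (3, 2, -262), (-5, -3, 438), (190, -82, -2003), (6, 4, -527), (-4, 78, -3123)],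
    ![(-3, -1, 200), (-9, 1, 340), (-1, 0, 45), (0, 0, 0), (-5, 1, 160), (-7, 2, 195), (-4, 3, -2), (-14, 4, 409), (-14, 4, 381), (-14, 4, 381), (-7, 2, 188), (1, 19, -1040), (50, -4, -1915), (1, 11, -620), (-9, 5, 120), (1, 11, -620), (-11, 6, 125), (-14, 4, 383), (-3, 2, 52), (-12, -7, 1113), (-12, 70, -2283), (1, 97, -2934), (-34, -10, 2357), (-3, 2, 52), (-2, 0, 97), (-11, 5, 183), (-11, 4, 241), (-16, -3, 971), (190, -82, -2003), (-7, 2, 188), (-12, 70, -2283)],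
    ![(-1, -1, 110), (-5, -1, 290), (-3, -1, 200), (5, -1, -160), (0, 0, 0), (-1, 0, 46), (-5, 7, -200), (-2, 0, 95), (-2, 0, 91), (-2, 0, 91), (-4, 1, 118), (1, 19, -1079), (50, -4, -1951), (1, 5, -316), (-9, 5, 119), (1, 5, -316), (-1, 1, -16), (-2, 0, 91), (-1, 1, -1), (-12, -7, 1113), (-8, 78, -2939), (1, 97, -3129), (-34, -10, 2357), (-1, 1, -1), (-2, 0, 97), (-4, 3, -4), (-1, 2, -79), (-16, -3, 971), (190, -82, -2003), (-3, 1, 73), (-8, 78, -2939)],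
    ![(-1, -8, 554), (1, -1, 16), (4, -1, -126), (7, -2, -195), (1, 0, -46), (0, 0, 0), (-3, 5, -165), (-1, -1, 113), (1, -1, 15), (2, 0, -93), (1, -1, 16), (1, 19, -1080), (50, -4, -2007), (1, 3, -208), (-9, 5, 139), (1, 3, -208), (3, -1, -79), (1, -2, 77), (-11, 17, -316), (-12, -7, 1136), (-4, 78, -3123), (1, 97, -3130), (-17, -5, 1216), (-11, 17, -316), (-19, -9, 1545), (2, 0, -93), (1, 0, -46), (-1, -1, 115), (95, -41, -1158), (2, 0, -93), (-4, 78, -3123)],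
    ![(1, -4, 202), (5, -7, 201), (5, -7, 195), (4, -3, 2), (5, -7, 200), (3, -5, 165), (0, 0, 0), (3, -5, 165), (5, -7, 195), (10, -14, 395), (5, -7, 200), (1, 19, -1040), (50, -4, -1915), (1, 11, -620), (-9, 5, 139), (1, 11, -620), (9, -11, 251), (5, -7, 195), (-5, 7, -104), (-12, -7, 1136), (-12, 70, -2283), (1, 97, -2934), (-17, -5, 1216), (-5, 7, -104), (-19, -9, 1545), (9, -10, 193), (1, -1, 15), (-1, -1, 115), (95, -41, -1050), (10, -14, 395), (-12, 70, -2283)],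
    ![(4, 3, -389), (1, 0, -48), (3, 1, -208), (14, -4, -409), (2, 0, -95), (1, 1, -113), (-3, 5, -165), (0, 0, 0), (3, 1, -208), (1, 0, -48), (1, 0, -48), (1, 19, -1091), (25, -2, -1040), (1, 2, -156), (-5, 3, 65), (1, 2, -156), (3, 1, -208), (3, 1, -208), (-11, 17, -316), (-12, -7, 1155), (2, 80, -3539), (1, 97, -3180), (-17, -5, 1238), (-11, 17, -316), (-3, -1, 221), (8, 2, -509), (5, 1, -300), (-15, -4, 1040), (95, -41, -1280), (8, 2, -509), (2, 80, -3539)],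
    ![(-2, -5, 411), (1, 0, -46), (-4, -3, 374), (14, -4, -381), (2, 0, -91), (-1, 1, -15), (-5, 7, -195), (-3, -1, 208), (0, 0, 0), (2, 1, -155), (1, 0, -46), (1, 19, -1080), (25, -2, -990), (1, 3, -208), (-9, 5, 128), (1, 3, -208), (-3, 5, -169), (1, 2, -171), (-7, 8, -54), (-24, -14, 2229), (-4, 78, -3123), (1, 97, -3130), (-17, -5, 1188), (-7, 8, -54), (-19, -9, 1512), (2, 2, -217), (1, 1, -108), (-5, -3, 438), (95, -41, -1090), (2, 2, -217), (-4, 78, -3123)],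
    ![(-2, -5, 411), (-1, -1, 109), (-6, -4, 529), (14, -4, -381), (2, 0, -91), (-2, 0, 93), (-10, 14, -395), (-1, 0, 48), (-2, -1, 155), (0, 0, 0), (2, -1, -29), (2, 38, -2159), (25, -2, -990), (8, 30, -1987), (-18, 10, 247), (8, 30, -1987), (-2, 2, -31), (-1, 1, -16), (-30, 32, -123), (-12, -7, 1112), (-1, 13, -505), (2, 194, -6259), (-17, -5, 1182), (-30, 32, -123), (-3, -1, 211), (-1, 1, -16), (2, 0, -91), (-3, -1, 211), (95, -41, -1090), (1, 1, -108), (-1, 13, -505)],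
    ![(-2, -5, 411), (-1, -2, 172), (-6, -4, 529), (7, -2, -188), (4, -1, -118), (-1, 1, -16), (-5, 7, -200), (-1, 0, 48), (-1, 0, 46), (-2, 1, 29), (0, 0, 0), (1, 19, -1079), (50, -4, -1957), (1, 5, -316), (-9, 5, 121), (1, 5, -316), (-1, 1, -16), (-2, 2, -33), (-1, 1, -1), (-12, -7, 1112), (-8, 78, -2939), (1, 97, -3129), (-17, -5, 1182), (-1, 1, -1), (-3, -1, 211), (-2, 2, -33), (3, -1, -73), (-3, -1, 211), (95, -41, -1063), (-1, 2, -79), (-8, 78, -2939)],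
    ![(-1, -19, 1091), (-1, -19, 1089), (-1, -19, 1080), (-1, -19, 1040), (-1, -19, 1079), (-1, -19, 1080), (-1, -19, 1040), (-1, -19, 1091), (-1, -19, 1080), (-2, -38, 2159), (-1, -19, 1079), (0, 0, 0), (49, -23, -977), (25, 26, -2272), (17, -29, 649), (23, -9, -543), (-1, -19, 1040), (-2, -38, 2159), (-2, -1, 168), (-24, -14, 2285), (2, 38, -1421), (1, 97, -2361), (-26, -17, 2368), (-22, 31, -84), (-5, -7, 627), (-1, -19, 1040), (-1, -19, 1040), (-1, -19, 1111), (95, -41, -1228), (-1, -19, 1079), (2, 38, -1421)],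
    ![(-50, 4, 1951), (-50, 4, 1951), (-50, 4, 1951), (-50, 4, 1915), (-50, 4, 1951), (-50, 4, 2007), (-50, 4, 1915), (-25, 2, 1040), (-25, 2, 990), (-25, 2, 990), (-50, 4, 1957), (-49, 23, 977), (0, 0, 0), (-26, 11, 575), (-34, 7, 1099), (5, 33, -1761), (-50, 4, 1915), (-25, 2, 991), (-50, 4, 2389), (-73, -26, 5880), (-14, 48, -1043), (1, 97, -2400), (-101, -11, 5713), (-46, 24, 1253), (-25, 2, 1063), (-50, 4, 1915), (-50, 4, 1915), (-41, -1, 1983), (29, -9, -461), (-50, 4, 1957), (-14, 48, -1043)],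
    ![(-2, -5, 367), (-1, -4, 264), (-1, -3, 208), (-1, -11, 620), (-1, -5, 316), (-1, -3, 208), (-1, -11, 620), (-1, -2, 156), (-1, -3, 208), (-8, -30, 1987), (-1, -5, 316), (-25, -26, 2272), (26, -11, -575), (0, 0, 0), (-6, -17, 1051), (23, -10, -496), (-1, -11, 620), (-8, -30, 1987), (-48, -14, 3123), (-12, -7, 1032), (-1, 23, -480), (2, 194, -2479), (-17, -5, 1108), (-47, 5, 2188), (-19, -9, 1397), (-1, -11, 620), (-1, -11, 620), (-5, -9, 739), (95, -41, -1228), (-1, -5, 316), (1, 17, -440)],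
    ![(9, -5, -139), (9, -5, -121), (9, -5, -128), (9, -5, -120), (9, -5, -119), (9, -5, -139), (9, -5, -139), (5, -3, -65), (9, -5, -128), (18, -10, -247), (9, -5, -121), (-17, 29, -649), (34, -7, -1099), (6, 17, -1051), (0, 0, 0), (-1, 1, -5), (9, -5, -128), (9, -5, -128), (-9, 5, 231), (-12, -7, 1155), (-14, 48, -1043), (1, 97, -2400), (-17, -5, 1238), (-9, 5, 231), (-37, 1, 1859), (18, -10, -247), (9, -5, -120), (-7, -8, 884), (95, -41, -1228), (18, -10, -247), (-14, 48, -1043)],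
    ![(-2, -5, 367), (-1, -4, 264), (-1, -3, 208), (-1, -11, 620), (-1, -5, 316), (-1, -3, 208), (-1, -11, 620), (-1, -2, 156), (-1, -3, 208), (-8, -30, 1987), (-1, -5, 316), (-23, 9, 543), (-5, -33, 1761), (-23, 10, 496), (1, -1, 5), (0, 0, 0), (-1, -11, 620), (-8, -30, 1987), (-19, 1, 932), (-12, -7, 1032), (-90, 74, 1505), (-22, 67, -24), (-17, -5, 1108), (-46, 24, 1253), (-19, -9, 1397), (-1, -11, 620), (-1, -11, 620), (-5, -9, 739), (70, -39, -272), (-1, -5, 316), (-22, 27, 56)],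
    ![(-4, -10, 819), (1, -1, 16), (1, -6, 325), (11, -6, -125), (1, -1, 16), (-3, 1, 79), (-9, 11, -251), (-3, -1, 208), (3, -5, 169), (2, -2, 31), (1, -1, 16), (1, 19, -1040), (50, -4, -1915), (1, 11, -620), (-9, 5, 128), (1, 11, -620), (0, 0, 0), (4, -5, 122), (-1, 1, 0), (-24, -14, 2229), (-12, 70, -2283), (1, 97, -2934), (-17, -5, 1188), (-1, 1, 0), (-19, -9, 1512), (8, -7, 62), (4, -3, 2), (-5, -3, 438), (95, -41, -1050), (2, -2, 31), (-12, 70, -2283)],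
    ![(-4, -10, 819), (0, -2, 125), (-1, -1, 109), (14, -4, -383), (2, 0, -91), (-1, 2, -77), (-5, 7, -195), (-3, -1, 208), (-1, -2, 171), (1, -1, 16), (2, -2, 33), (2, 38, -2159), (25, -2, -991), (8, 30, -1987), (-9, 5, 128), (8, 30, -1987), (-4, 5, -122), (0, 0, 0), (-7, 8, -54), (-24, -14, 2229), (-4, 78, -3123), (2, 194, -6259), (-17, -5, 1188), (-7, 8, -54), (-19, -9, 1512), (2, -1, -30), (2, 0, -91), (-5, -3, 438), (190, -82, -2221), (1, 0, -46), (-4, 78, -3123)],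
    ![(11, -17, 316), (15, -17, 124), (7, -8, 54), (3, -2, -52), (1, -1, 1), (11, -17, 316), (5, -7, 104), (11, -17, 316), (7, -8, 54), (30, -32, 123), (1, -1, 1), (2, 1, -168), (50, -4, -2389), (48, 14, -3123), (9, -5, -231), (19, -1, -932), (1, -1, 0), (7, -8, 54), (0, 0, 0), (-141, -97, 14479), (67, 94, -6928), (1, 3, -105), (3, -13, 415), (68, 29, -5482), (-13, -16, 1529), (4, -3, -52), (3, -2, -52), (9, -19, 546), (95, -41, -2151), (30, -32, 123), (90, 82, -7779)],
    ![(12, 7, -1136), (12, 7, -1113), (24, 14, -2229), (12, 7, -1113), (12, 7, -1113), (12, 7, -1136), (12, 7, -1136), (12, 7, -1155), (24, 14, -2229), (12, 7, -1112), (12, 7, -1112), (24, 14, -2285), (73, 26, -5880), (12, 7, -1032), (12, 7, -1155), (12, 7, -1032), (24, 14, -2229), (24, 14, -2229), (141, 97, -14479), (0, 0, 0), (118, 109, -12145), (97, 153, -10047), (147, 71, -13649), (24, 14, -2285), (12, 7, -1155), (24, 14, -2217), (24, 14, -2205), (64, 31, -5951), (191, 15, -10241), (24, 14, -2217), (12,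 7, -990)],
    ![(-2, -80, 3539), (6, -80, 3155), (4, -78, 3123), (12, -70, 2283), (8, -78, 2939), (4, -78, 3123), (12, -70, 2283), (-2, -80, 3539), (4, -78, 3123), (1, -13, 505), (8, -78, 2939), (-2, -38, 1421), (14, -48, 1043), (1, -23, 480), (14, -48, 1043), (90, -74, -1505), (12, -70, 2283), (4, -78, 3123), (-67, -94, 6928), (-118, -109, 12145), (0, 0, 0), (23, 150, -2496), (-44, -106, 6077), (1, -65, 1446), (-44, -106, 6077), (12, -70, 2283), (12, -70, 2283), (-2, -28, 1333), (190, -82, -4105), (1, -13, 505), (43, 9, -2314)],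
    ![(-1, -97, 3180), (-1, -97, 3178), (-1, -97, 3130), (-1, -97, 2934), (-1, -97, 3129), (-1, -97, 3130), (-1, -97, 2934), (-1, -97, 3180), (-1, -97, 3130), (-2, -194, 6259), (-1, -97, 3129), (-1, -97, 2361), (-1, -97, 2400), (-2, -194, 2479), (-1, -97, 2400), (22, -67, 24), (-1, -97, 2934), (-2, -194, 6259), (-1, -3, 105), (-97, -153, 10047), (-23, -150, 2496), (0, 0, 0), (-1, -97, 2361), (-2, -194, 2479), (-1, -97, 2361), (-1, -97, 2934), (-1, -97, 2934), (-1, -97, 3278), (47, -69, -97), (-1, -97, 3129), (20, -141, 182)],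
    ![(17, 5, -1216), (17, 5, -1182), (17, 5, -1188), (34, 10, -2357), (34, 10, -2357), (17, 5, -1216), (17, 5, -1216), (17, 5, -1238), (17, 5, -1188), (17, 5, -1182), (17, 5, -1182), (26, 17, -2368), (101, 11, -5713), (17, 5, -1108), (17, 5, -1238), (17, 5, -1108), (17, 5, -1188), (17, 5, -1188), (-3, 13, -415), (-147, -71, 13649), (44, 106, -6077), (1, 97, -2361), (0, 0, 0), (28, 27, -2950), (35, 12, -2687), (34, 10, -2359), (17, 5, -1171), (83, 21, -5855), (73, -13, -2097), (34, 10, -2359), (24, 46, -2907)],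
    ![(11, -17, 316), (15, -17, 124), (7, -8, 54), (3, -2, -52), (1, -1, 1), (11, -17, 316), (5, -7, 104), (11, -17, 316), (7, -8, 54), (30, -32, 123), (1, -1, 1), (22, -31, 84), (46, -24, -1253), (47, -5, -2188), (9, -5, -231), (46, -24, -1253), (1, -1, 0), (7, -8, 54), (-68, -29, 5482), (-24, -14, 2285), (-1, 65, -1446), (2, 194, -2479), (-28, -27, 2950), (0, 0, 0), (4, -21, 722), (4, -3, -52), (3, -2, -52), (9, -19, 546), (190, -82, -4105), (30, -32, 123), (1, 16, -417)],
    ![(19, 9, -1545), (3, 1, -211), (19, 9, -1512), (2, 0, -97), (2, 0, -97), (19, 9, -1545), (19, 9, -1545), (3, 1, -221), (19, 9, -1512), (3, 1, -211), (3, 1, -211), (5, 7, -627), (25, -2, -1063), (19, 9, -1397), (37, -1, -1859), (19, 9, -1397), (19, 9, -1512), (19, 9, -1512), (13, 16, -1529), (-12, -7, 1155), (44, 106, -6077), (1, 97, -2361), (-35, -12, 2687), (-4, 21, -722), (0, 0, 0), (38, 18, -3005), (7, 3, -530), (13, -3, -481), (95, -41, -1334), (38, 18, -3005), (24, 46, 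-2907)],
    ![(-4, -10, 817), (0, -2, 125), (-6, -4, 527), (11, -5, -183), (4, -3, 4), (-2, 0, 93), (-9, 10, -193), (-8, -2, 509), (-2, -2, 217), (1, -1, 16), (2, -2, 33), (1, 19, -1040), (50, -4, -1915), (1, 11, -620), (-18, 10, 247), (1, 11, -620), (-8, 7, -62), (-2, 1, 30), (-4, 3, 52), (-24, -14, 2217), (-12, 70, -2283), (1, 97, -2934), (-34, -10, 2359), (-4, 3, 52), (-38, -18, 3005), (0, 0, 0), (8, -5, -54), (-4, -2, 323), (95, -41, -1050), (1, -1, 16), (-12, 70, -2283)],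
    ![(-4, -10, 815), (-1, -1, 108), (-3, -2, 262), (11, -4, -241), (1, -2, 79), (-1, 0, 46), (-1, 1, -15), (-5, -1, 300), (-1, -1, 108), (-2, 0, 91), (-3, 1, 73), (1, 19, -1040), (50, -4, -1915), (1, 11, -620), (-9, 5, 120), (1, 11, -620), (-4, 3, -2), (-2, 0, 91), (-3, 2, 52), (-24, -14, 2205), (-12, 70, -2283), (1, 97, -2934), (-17, -5, 1171), (-3, 2, 52), (-7, -3, 530), (-8, 5, 54), (0, 0, 0), (-7, -3, 530), (95, -41, -1050), (-4, 1, 118), (-12, 70, -2283)],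
    ![(1, 1, -115), (3, 1, -211), (5, 3, -438), (16, 3, -971), (16, 3, -971), (1, 1, -115), (1, 1, -115), (15, 4, -1040), (5, 3, -438), (3, 1, -211), (3, 1, -211), (1, 19, -1111), (41, 1, -1983), (5, 9, -739), (7, 8, -884), (5, 9, -739), (5, 3, -438), (5, 3, -438), (-9, 19, -546), (-64, -31, 5951), (2, 28, -1333), (1, 97, -3278), (-83, -21, 5855), (-9, 19, -546), (-13, 3, 481), (4, 2, -323), (7, 3, -530), (0, 0, 0), (127, -35, -2447), (4, 2, -323), (2, 28, -1333)],
    ![(-190, 82, 2003), (-190, 82, 2003), (-190, 82, 2003), (-190, 82, 2003), (-190, 82, 2003), (-95, 41, 1158), (-95, 41, 1050), (-95, 41, 1280), (-95, 41, 1090), (-95, 41, 1090), (-95, 41, 1063), (-95, 41, 1228), (-29, 9, 461), (-95, 41, 1228), (-95, 41, 1228), (-70, 39, 272), (-95, 41, 1050), (-190, 82, 2221), (-95, 41, 2151), (-191, -15, 10241), (-190, 82, 4105), (-47, 69, 97), (-73, 13, 2097), (-190, 82, 4105), (-95, 41, 1334), (-95, 41, 1050), (-95, 41, 1050), (-127,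 35, 2447), (0, 0, 0), (-95, 41, 1063), (-116, 85, 410)],
    ![(-4, -10, 817), (0, -2, 125), (-6, -4, 527), (7, -2, -188), (3, -1, -73), (-2, 0, 93), (-10, 14, -395), (-8, -2, 509), (-2, -2, 217), (-1, -1, 108), (1, -2, 79), (1, 19, -1079), (50, -4, -1957), (1, 5, -316), (-18, 10, 247), (1, 5, -316), (-2, 2, -31), (-1, 0, 46), (-30, 32, -123), (-24, -14, 2217), (-1, 13, -505), (1, 97, -3129), (-34, -10, 2359), (-30, 32, -123), (-38, -18, 3005), (-1, 1, -16), (4, -1, -118), (-4, -2, 323), (95, -41, -1063), (0, 0, 0), (-1, 13, -505)],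
    ![(-2, -80, 3539), (6, -80, 3155), (4, -78, 3123), (12, -70, 2283), (8, -78, 2939), (4, -78, 3123), (12, -70, 2283), (-2, -80, 3539), (4, -78, 3123), (1, -13, 505), (8, -78, 2939), (-2, -38, 1421), (14, -48, 1043), (-1, -17, 440), (14, -48, 1043), (22, -27, -56), (12, -70, 2283), (4, -78, 3123), (-90, -82, 7779), (-12, -7, 990), (-43, -9, 2314), (-20, 141, -182), (-24, -46, 2907), (-1, -16, 417), (-24, -46, 2907), (12, -70, 2283), (12, -70, 2283), (-2, -28, 1333), (116, -85, -410), (1, -13, 505), (0, 0, 0)]]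

def vcf : Fin 31 → Fin 14 → ℤ × ℤ × ℤ :=
  ![![(0, 0, -1), (0, 0, -1), (2, 5, -415), (2, 5, -415), (2, 5, -415), (2, 5, -415), (2, 5, -415), (2, 5, -415), (-2, -5, 415), (2, 5, -415), (2, 5, -415), (2, 5, -415), (-2, -5, 415), (2, 5, -415)],
    ![(0, 0, -1), (-2, -1, 155), (0, 0, -1), (2, 1, -155), (-2, -1, 155), (-2, -1, 155), (-2, -1, 155), (2, 1, -155), (-2, -1, 155), (2, 1, -155), (2, 1, -155), (2, 1, -155), (-2, -1, 155), (2, 1, -155)],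
    ![(0, 0, -1), (-3, -2, 265), (3, 2, -265), (3, 2, -265), (0, 0, -1), (-3, -2, 265), (-3, -2, 265), (3, 2, -265), (-3, -2, 265), (3, 2, -265), (3, 2, -265), (3, 2, -265), (-3, -2, 265), (3, 2, -265)],
    ![(0, 0, -1), (-7, 2, 185), (-7, 2, 185), (-7, 2, 185), (-7, 2, 185), (-7, 2, 185), (-7, 2, 185), (0, 0, -1), (7, -2, -185), (-7, 2, 185), (-7, 2, 185), (-7, 2, 185), (-7, 2, 185), (7, -2, -185)],
    ![(0, 0, -1), (-1, 0, 45), (-1, 0, 45), (1, 0, -45), (-1, 0, 45), (-1, 0, 45), (-1, 0, 45), (1, 0, -45), (-1, 0, 45), (-1, 0, 45), (-1, 0, 45), (0, 0, -1), (-1, 0, 45), (1, 0, -45)],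
    ![(1, -3, 139), (0, 0, -1), (1, -3, 139), (-1, 3, -139), (0, 0, -1), (-1, 3, -139), (-1, 3, -139), (-1, 3, -139), (1, -3, 139), (1, -3, 139), (-1, 3, -139), (1, -3, 139), (1, -3, 139), (-1, 3, -139)],
    ![(5, -7, 191), (0, 0, -1), (5, -7, 191), (-5, 7, -191), (5, -7, 191), (-5, 7, -191), (-5, 7, -191), (0, 0, -1), (5, -7, 191), (5, -7, 191), (-5, 7, -191), (5, -7, 191), (5, -7, 191), (-5, 7, -191)],
    ![(1, -1, 13), (0, 0, -1), (1, -1, 13), (-1, 1, -13), (1, -1, 13), (-1, 1, -13), (-1, 1, -13), (1, -1, 13), (1, -1, 13), (1, -1, 13), (-1, 1, -13), (1, -1, 13), (0, 0, -1), (-1, 1, -13)],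
    ![(-1, -1, 109), (-1, -1, 109), (0, 0, -1), (1, 1, -109), (0, 0, -1), (1, 1, -109), (1, 1, -109), (1, 1, -109), (-1, -1, 109), (1, 1, -109), (1, 1, -109), (1, 1, -109), (-1, -1, 109), (1, 1, -109)],
    ![(1, 0, -46), (-1, 0, 46), (0, 0, -1), (1, 0, -46), (-1, 0, 46), (-1, 0, 46), (-1, 0, 46), (1, 0, -46), (0, -1, 80), (0, 0, -1), (-1, 0, 46), (1, 0, -46), (-1, 0, 46), (1, 0, -46)],
    ![(1, -1, 17), (-1, 1, -17), (0, 0, -1), (-1, 1, -17), (-1, 1, -17), (-1, 1, -17), (-1, 1, -17), (-1, 1, -17), (1, -1, 17), (-1, 1, -17), (-1, 1, -17), (0, 0, -1), (-1, 1, -17), (-1, 1, -17)],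
    ![(-1, -19, 935), (-1, -19, 935), (-1, -19, 935), (0, 0, -1), (-1, -19, 935), (1, 19, -935), (0, 0, -1), (-1, -19, 935), (-1, -19, 935), (-1, -19, 935), (1, 19, -935), (-1, -19, 935), (-1, -19, 935), (1, 19, -935)],
    ![(-25, 2, 956), (-25, 2, 956), (-25, 2, 956), (0, 0, -1), (-25, 2, 956), (-25, 2, 956), (-25, 2, 956), (-25, 2, 956), (0, 0, -1), (-25, 2, 956), (-25, 2, 956), (-25, 2, 956), (-25, 2, 956), (25, -2, -956)],
    ![(-24, -7, 1337), (-24, -7, 1337), (-24, -7, 1337), (0, 0, -1), (-24, -7, 1337), (-24, -7, 1337), (-24, -7, 1337), (-24, -7, 1337), (-24, -7, 1337), (-24, -7, 1337), (0, 0, -1), (-24, -7, 1337), (-24, -7, 1337), (24, 7, -1337)],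
    ![(9, -5, -143), (9, -5, -143), (9, -5, -143), (0, 0, -1), (9, -5, -143), (-9, 5, 143), (-9, 5, 143), (9, -5, -143), (9, -5, -143), (9, -5, -143), (-9, 5, 143), (9, -5, -143), (0, 0, -1), (9, -5, -143)],
    ![(45, -37, -151), (45, -37, -151), (45, -37, -151), (0, 0, -1), (45, -37, -151), (-45, 37, 151), (-45, 37, 151), (45, -37, -151), (45, -37, -151), (45, -37, -151), (-45, 37, 151), (45, -37, -151), (45, -37, -151), (0, 0, -1)],
    ![(1, -1, 15), (-1, 1, -15), (1, -1, 15), (-1, 1, -15), (0, 0, -1), (-1, 1, -15), (-1, 1, -15), (0, 0, -1), (1, -1, 15), (1, -1, 15), (-1, 1, -15), (1, -1, 15), (-1, 1, -15), (-1, 1, -15)],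
    ![(0, -1, 62), (0, -1, 62), (0, -1, 62), (0, 1, -62), (0, 0, -1), (0, 1, -62), (0, 1, -62), (0, 1, -62), (0, -1, 62), (0, 0, -1), (0, 1, -62), (2, 0, -91), (0, -1, 62), (0, 1, -62)],
    ![(-45, -41, 4631), (-45, -41, 4631), (-45, -41, 4631), (45, 41, -4631), (-45, -41, 4631), (0, 0, -1), (0, 0, -1), (45, 41, -4631), (-45, -41, 4631), (45, 41, -4631), (45, 41, -4631), (45, 41, -4631), (-45, -41, 4631), (45, 41, -4631)],
    ![(12, 7, -1231), (12, 7, -1231), (12, 7, -1231), (12, 7, -1231), (12, 7, -1231), (0, 0, -1), (12, 7, -1231), (12, 7, -1231), (0, 0, -1), (12, 7, -1231), (12, 7, -1231), (12, 7, -1231), (12, 7, -1231), (12, 7, -1231)],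
    ![(-22, -53, 2297), (-22, -53, 2297), (-22, -53, 2297), (-22, -53, 2297), (-22, -53, 2297), (0, 0, -1), (-22, -53, 2297), (-22, -53, 2297), (-22, -53, 2297), (-22, -53, 2297), (0, 0, -1), (-22, -53, 2297), (-22, -53, 2297), (22, 53, -2297)],
    ![(-1, -97, 199), (-1, -97, 199), (-1, -97, 199), (-1, -97, 199), (-1, -97, 199), (0, 0, -1), (-1, -97, 199), (-1, -97, 199), (-1, -97, 199), (-1, -97, 199), (-1, -97, 199), (-1, -97, 199), (-1, -97, 199), (0, 0, -1)],
    ![(17, 5, -1267), (17, 5, -1267), (17, 5, -1267), (17, 5, -1267), (17, 5, -1267), (-17, -5, 1267), (0, 0, -1), (17, 5, -1267), (0, 0, -1), (17, 5, -1267), (17, 5, -1267), (17, 5, -1267), (17, 5, -1267), (17, 5, -1267)],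
    ![(23, -12, -851), (23, -12, -851), (23, -12, -851), (23, -12, -851), (23, -12, -851), (-23, 12, 851), (0, 0, -1), (23, -12, -851), (23, -12, -851), (23, -12, -851), (0, 0, -1), (23, -12, -851), (23, -12, -851), (23, -12, -851)],
    ![(19, 9, -1573), (19, 9, -1573), (19, 9, -1573), (19, 9, -1573), (19, 9, -1573), (-19, -9, 1573), (0, 0, -1), (19, 9, -1573), (-19, -9, 1573), (19, 9, -1573), (19, 9, -1573), (19, 9, -1573), (0, 0, -1), (19, 9, -1573)],
    ![(4, -3, 2), (-4, 3, -2), (4, -3, 2), (-4, 3, -2), (-4, 3, -2), (-4, 3, -2), (-4, 3, -2), (0, 0, -1), (4, -3, 2), (0, 0, -1), (-4, 3, -2), (4, -3, 2), (-4, 3, -2), (-4, 3, -2)],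
    ![(2, -1, -28), (-2, 1, 28), (-2, 1, 28), (-2, 1, 28), (-2, 1, 28), (-2, 1, 28), (-2, 1, 28), (0, 0, -1), (2, -1, -28), (-2, 1, 28), (-2, 1, 28), (0, 0, -1), (-2, 1, 28), (2, -1, -28)],
    ![(16, 3, -1027), (16, 3, -1027), (16, 3, -1027), (16, 3, -1027), (16, 3, -1027), (-16, -3, 1027), (-16, -3, 1027), (16, 3, -1027), (0, 0, -1), (16, 3, -1027), (16, 3, -1027), (16, 3, -1027), (0, 0, -1), (16, 3, -1027)],
    ![(-95, 41, 393), (-95, 41, 393), (-95, 41, 393), (-95, 41, 393), (-95, 41, 393), (-95, 41, 393), (-95, 41, 393), (-95, 41, 393), (0, 0, -1), (-95, 41, 393), (-95, 41, 393), (-95, 41, 393), (-95, 41, 393), (0, 0, -1)],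
    ![(0, -1, 62), (0, -1, 62), (0, -1, 62), (0, 1, -62), (-2, 0, 93), (0, 1, -62), (0, 1, -62), (0, 1, -62), (0, -1, 62), (0, 0, -1), (0, 1, -62), (0, 0, -1), (0, -1, 62), (0, 1, -62)],
    ![(21, -44, -17), (21, -44, -17), (21, -44, -17), (21, -44, -17), (21, -44, -17), (-21, 44, 17), (21, -44, -17), (21, -44, -17), (21, -44, -17), (21, -44, -17), (0, 0, -1), (21, -44, -17), (21, -44, -17), (0, 0, -1)]]

def adjB (u v : Fin 14) : Bool := (mask u).testBit v.val

def G14 : SimpleGraph (Fin 14) where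
  Adj u v := adjB u v
  symm := ⟨fun u v h => by
    have H : ∀ u v : Fin 14, adjB u v → adjB v u := by decide
    exact H u v h⟩
  loopless := ⟨fun u h => by
    have H : ∀ u : Fin 14, ¬ adjB u u := by decide
    exact H u h⟩

instance : DecidableRel G14.Adj := fun u v => inferInstanceAs (Decidable (adjB u v = true))

def lineV (a b c : ℤ) (w : Fin 14) : ℤ := a * px w + b * py w + c

lemma ev_adj : ∀ i : Fin 31, G14.Adj (ev i).1 (ev i).2 := by decide

lemma adj_repr : ∀ x y : Fin 14, G14.Adj x y →
    ∃ i : Fin 31, ev i = (x, y) ∨ ev i = (y, x) := by decide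

lemma ev_inj : ∀ i j : Fin 31,
    (ev i = ev j ∨ ev i = ((ev j).2, (ev j).1)) → i = j := by decide

lemma pos_inj_Z : ∀ i j : Fin 14, px i = px j → py i = py j → i = j := by decide

lemma pc_ok : ∀ i j : Fin 31, ¬(ev i = ev j ∨ ev i = ((ev j).2, (ev j).1)) →
    0 ≤ lineV (pcf i j).1 (pcf i j).2.1 (pcf i j).2.2 (ev i).1 ∧
    0 ≤ lineV (pcf i j).1 (pcf i j).2.1 (pcf i j).2.2 (ev i).2 ∧
    0 < lineV (pcf i j).1 (pcf i j).2.1 (pcf i j).2.2 (ev i).1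
        + lineV (pcf i j).1 (pcf i j).2.1 (pcf i j).2.2 (ev i).2 ∧
    lineV (pcf i j).1 (pcf i j).2.1 (pcf i j).2.2 (ev j).1 ≤ 0 ∧
    lineV (pcf i j).1 (pcf i j).2.1 (pcf i j).2.2 (ev j).2 ≤ 0 := by decide

lemma vc_ok : ∀ i : Fin 31, ∀ w : Fin 14, w ≠ (ev i).1 → w ≠ (ev i).2 →
    0 ≤ lineV (vcf i w).1 (vcf i w).2.1 (vcf i w).2.2 (ev i).1 ∧
    0 ≤ lineV (vcf i w).1 (vcf i w).2.1 (vcf i w).2.2 (ev i).2 ∧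
    lineV (vcf i w).1 (vcf i w).2.1 (vcf i w).2.2 w < 0 := by decide

set_option maxRecDepth 10000 in
lemma nkey : ∀ x y a b : Fin 14, G14.Adj x y → G14.Adj x a → G14.Adj x b →
    a ≠ b → a ≠ y → b ≠ y →
    ((Finset.univ.filter (fun z => G14.Adj y z ∧ z ≠ x ∧ z ≠ a ∧ z ≠ b)).card ≤ 3) := by decide

lemma hsum : ∑ v, G14.degree v = 62 := by decide

/-! ### Real geometry -/

noncomputable def pos (i : Fin 14) : ℝ × ℝ := ((px i : ℝ), (py i : ℝ))

noncomputable def lineR (a b c : ℤ) (x : ℝ × ℝ) : ℝ := (a : ℝ) * x.1 + (b : ℝ) * x.2 + (c : ℝ)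

lemma cast_nonneg {a b c : ℤ} {w : Fin 14} (h : 0 ≤ lineV a b c w) :
    0 ≤ lineR a b c (pos w) := by
  have : (0 : ℝ) ≤ ((a * px w + b * py w + c : ℤ) : ℝ) := by exact_mod_cast h
  simpa [lineR, pos] using this

lemma cast_nonpos {a b c : ℤ} {w : Fin 14} (h : lineV a b c w ≤ 0) :
    lineR a b c (pos w) ≤ 0 := by
  have : ((a * px w + b * py w + c : ℤ) : ℝ) ≤ 0 := by exact_mod_cast h
  simpa [lineR, pos] using this

lemma cast_neg {a b c : ℤ} {w : Fin 14} (h : lineV a b c w < 0) :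
    lineR a b c (pos w) < 0 := by
  have : ((a * px w + b * py w + c : ℤ) : ℝ) < 0 := by exact_mod_cast h
  simpa [lineR, pos] using this

lemma cast_sum_pos {a b c : ℤ} {u w : Fin 14} (h : 0 < lineV a b c u + lineV a b c w) :
    0 < lineR a b c (pos u) + lineR a b c (pos w) := by
  have : (0:ℝ) < ((a * px u + b * py u + c : ℤ) : ℝ) + ((a * px w + b * py w + c : ℤ) : ℝ) := by
    exact_mod_cast h
  simpa [lineR, pos] using this

lemma lineR_comb {a b c : ℤ} {p q : ℝ × ℝ} {s t : ℝ} (hst : s + t = 1) :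
    lineR a b c (s • p + t • q) = s * lineR a b c p + t * lineR a b c q := by
  simp only [lineR, Prod.fst_add, Prod.snd_add, Prod.smul_fst, Prod.smul_snd, smul_eq_mul]
  have hc : (c : ℝ) = (s + t) * c := by rw [hst]; ring
  calc (a:ℝ) * (s * p.1 + t * q.1) + (b:ℝ) * (s * p.2 + t * q.2) + (c:ℝ)
      = (a:ℝ) * (s * p.1 + t * q.1) + (b:ℝ) * (s * p.2 + t * q.2) + (s + t) * c := by rw [← hc]
    _ = s * ((a:ℝ) * p.1 + b * p.2 + c) + t * ((a:ℝ) * q.1 + b * q.2 + c) := by ring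

lemma seg_nonneg {a b c : ℤ} {p q x : ℝ × ℝ} (hp : 0 ≤ lineR a b c p)
    (hq : 0 ≤ lineR a b c q) (hx : x ∈ openSegment ℝ p q) : 0 ≤ lineR a b c x := by
  obtain ⟨s, t, hs, ht, hst, rfl⟩ := hx
  rw [lineR_comb hst]
  have := mul_nonneg hs.le hp
  have := mul_nonneg ht.le hq
  linarith

lemma seg_pos {a b c : ℤ} {p q x : ℝ × ℝ} (hp : 0 ≤ lineR a b c p)
    (hq : 0 ≤ lineR a b c q) (hsum : 0 < lineR a b c p + lineR a b c q)
    (hx : x ∈ openSegment ℝ p q) : 0 < lineR a b c x := by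
  obtain ⟨s, t, hs, ht, hst, rfl⟩ := hx
  rw [lineR_comb hst]
  rcases lt_or_ge 0 (lineR a b c p) with h | h
  · have h1 := mul_pos hs h
    have h2 := mul_nonneg ht.le hq
    linarith
  · have hq' : 0 < lineR a b c q := by linarith
    have h1 := mul_pos ht hq'
    have h2 := mul_nonneg hs.le hp
    linarith

lemma seg_nonpos {a b c : ℤ} {p q x : ℝ × ℝ} (hp : lineR a b c p ≤ 0)
    (hq : lineR a b c q ≤ 0) (hx : x ∈ openSegment ℝ p q) : lineR a b c x ≤ 0 := by
  obtain ⟨s, t, hs, ht, hst, rfl⟩ := hx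
  rw [lineR_comb hst]
  have := mul_nonpos_of_nonneg_of_nonpos hs.le hp
  have := mul_nonpos_of_nonneg_of_nonpos ht.le hq
  linarith

lemma pos_inj : Function.Injective pos := by
  intro i j h
  have h1 : (px i : ℝ) = (px j : ℝ) := congrArg Prod.fst h
  have h2 : (py i : ℝ) = (py j : ℝ) := congrArg Prod.snd h
  exact pos_inj_Z i j (by exact_mod_cast h1) (by exact_mod_cast h2)

/-- a chosen pair of endpoints for an element of `Sym2` -/
noncomputable def outP (e : Sym2 (Fin 14)) : Fin 14 × Fin 14 :=
  Quotient.out (s := Sym2.Rel.setoid (Fin 14)) e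

lemma outP_spec (e : Sym2 (Fin 14)) : s((outP e).1, (outP e).2) = e :=
  Quotient.out_eq (s := Sym2.Rel.setoid (Fin 14)) e

/-- the straight-line arc of an edge, using a chosen pair of endpoints -/
noncomputable def arc (e : G14.edgeSet) : ℝ → ℝ × ℝ := fun t =>
  (1 - t) • pos (outP (e : Sym2 (Fin 14))).1 + t • pos (outP (e : Sym2 (Fin 14))).2

lemma out_adj (e : G14.edgeSet) :
    G14.Adj (outP (e : Sym2 (Fin 14))).1 (outP (e : Sym2 (Fin 14))).2 := by
  have h := e.2
  rw [← outP_spec (e : Sym2 (Fin 14))] at h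
  exact (SimpleGraph.mem_edgeSet G14).mp h

lemma exists_idx (e : G14.edgeSet) :
    ∃ i : Fin 31, (e : Sym2 (Fin 14)) = s((ev i).1, (ev i).2) := by
  obtain ⟨i, hi⟩ := adj_repr _ _ (out_adj e)
  refine ⟨i, ?_⟩
  rw [← outP_spec (e : Sym2 (Fin 14))]
  rcases hi with h | h
  · rw [h]
  · rw [h]
    exact Sym2.eq_swap

lemma mem_open_seg {p q : ℝ × ℝ} {t : ℝ} (h0 : 0 < t) (h1 : t < 1) :
    (1 - t) • p + t • q ∈ openSegment ℝ p q :=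
  ⟨1 - t, t, by linarith, h0, by ring, rfl⟩

lemma arc_mem_seg (e : G14.edgeSet) {u v : Fin 14} (h : (e : Sym2 (Fin 14)) = s(u, v))
    {t : ℝ} (h0 : 0 < t) (h1 : t < 1) : arc e t ∈ openSegment ℝ (pos u) (pos v) := by
  have hout : s((outP (e : Sym2 (Fin 14))).1, (outP (e : Sym2 (Fin 14))).2)
      = s(u, v) := by rw [outP_spec, h]
  rcases Sym2.eq_iff.mp hout with ⟨ha, hb⟩ | ⟨ha, hb⟩
  · rw [arc, ha, hb]; exact mem_open_seg h0 h1
  · rw [arc, ha, hb, openSegment_symm]; exact mem_open_seg h0 h1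

theorem main_theorem :
    ∃ G : SimpleGraph (Fin 14), IsPlanar G ∧ ¬ ContainsS24 G ∧
      G.edgeSet.ncard = 31 := by
  refine ⟨G14, ?_, ?_, ?_⟩
  · -- planarity
    refine ⟨pos, arc, pos_inj, ?_, ?_, ?_, ?_, ?_⟩
    · -- continuity
      intro e
      have : Continuous (arc e) := by
        unfold arc
        exact ((continuous_const.sub continuous_id).smul continuous_const).add
          (continuous_id.smul continuous_const)
      exact this.continuousOn
    · -- injectivity on [0,1]
      intro e s hs t ht h
      set u := (outP (e : Sym2 (Fin 14))).1
      set v := (outP (e : Sym2 (Fin 14))).2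
      have hne : pos u ≠ pos v := fun hh => (out_adj e).ne (pos_inj hh)
      have h1 : (1 - s) * (pos u).1 + s * (pos v).1 = (1 - t) * (pos u).1 + t * (pos v).1 := by
        have := congrArg Prod.fst h
        simpa [arc, Prod.fst_add, Prod.smul_fst, smul_eq_mul] using this
      have h2 : (1 - s) * (pos u).2 + s * (pos v).2 = (1 - t) * (pos u).2 + t * (pos v).2 := by
        have := congrArg Prod.snd h
        simpa [arc, Prod.snd_add, Prod.smul_snd, smul_eq_mul] using this
      have h1' : (s - t) * ((pos v).1 - (pos u).1) = 0 := by linarith [h1]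
      have h2' : (s - t) * ((pos v).2 - (pos u).2) = 0 := by linarith [h2]
      by_cases hc : (pos u).1 = (pos v).1
      · have hc2 : (pos u).2 ≠ (pos v).2 := fun hh => hne (Prod.ext hc hh)
        have : (pos v).2 - (pos u).2 ≠ 0 := fun hh => hc2 (by linarith)
        have := (mul_eq_zero.mp h2').resolve_right this
        linarith
      · have : (pos v).1 - (pos u).1 ≠ 0 := fun hh => hc (by linarith)
        have := (mul_eq_zero.mp h1').resolve_right this
        linarith
    · -- endpoints
      intro e
      refine ⟨(outP (e : Sym2 (Fin 14))).1, (outP (e : Sym2 (Fin 14))).2,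
        (outP_spec _).symm, ?_, ?_⟩ <;> simp [arc]
    · -- arc interiors avoid vertices
      intro e t ht ⟨w, hw⟩
      obtain ⟨i, hi⟩ := exists_idx e
      have hseg := arc_mem_seg e hi ht.1 ht.2
      have hadj : G14.Adj (ev i).1 (ev i).2 := ev_adj i
      by_cases hw1 : w = (ev i).1
      · rw [hw1] at hw
        rw [← hw] at hseg
        have := left_mem_openSegment_iff.mp hseg
        exact hadj.ne (pos_inj this)
      · by_cases hw2 : w = (ev i).2
        · rw [hw2] at hw
          rw [← hw] at hseg
          have := right_mem_openSegment_iff.mp hseg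
          exact hadj.ne (pos_inj this)
        · obtain ⟨c1, c2, c3⟩ := vc_ok i w hw1 hw2
          have hge := seg_nonneg (cast_nonneg c1) (cast_nonneg c2) hseg
          rw [← hw] at hge
          exact absurd hge (not_le.mpr (cast_neg c3))
    · -- distinct arcs have disjoint interiors
      intro e f hef s hs t ht h
      obtain ⟨i, hi⟩ := exists_idx e
      obtain ⟨j, hj⟩ := exists_idx f
      have hne : ¬(ev i = ev j ∨ ev i = ((ev j).2, (ev j).1)) := by
        intro hcon
        apply hef
        apply Subtype.ext
        rw [hi, hj]
        rcases hcon with h' | h'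
        · rw [h']
        · rw [h']
          exact Sym2.eq_swap
      obtain ⟨c1, c2, c3, c4, c5⟩ := pc_ok i j hne
      have hse := arc_mem_seg e hi hs.1 hs.2
      have hsf := arc_mem_seg f hj ht.1 ht.2
      have hpos := seg_pos (cast_nonneg c1) (cast_nonneg c2) (cast_sum_pos c3) hse
      have hneg := seg_nonpos (cast_nonpos c4) (cast_nonpos c5) hsf
      rw [h] at hpos
      linarith
  · -- no S24
    rintro ⟨x, y, a, b, c, d, e, f, hxy, hxa, hxb, hyc, hyd, hye, hyf, hnd⟩
    simp only [List.nodup_cons, List.mem_cons, List.not_mem_nil, or_false,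
      List.nodup_nil, and_true, not_or] at hnd
    obtain ⟨⟨hx1, hx2, hx3, hx4, hx5, hx6, hx7⟩, ⟨hy1, hy2, hy3, hy4, hy5, hy6⟩,
      ⟨ha1, ha2, ha3, ha4, ha5⟩, ⟨hb1, hb2, hb3, hb4⟩, ⟨hc1, hc2, hc3⟩, ⟨hd1, hd2⟩, he1⟩ := hnd
    have hkey := nkey x y a b hxy hxa hxb ha1
      (fun h => hy1 h.symm) (fun h => hy2 h.symm)
    have hmem : ∀ z, G14.Adj y z → z ≠ x → z ≠ a → z ≠ b →
        z ∈ Finset.univ.filter (fun z => G14.Adj y z ∧ z ≠ x ∧ z ≠ a ∧ z ≠ b) := by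
      intro z h1 h2 h3 h4
      simp only [Finset.mem_filter, Finset.mem_univ, true_and]
      exact ⟨h1, h2, h3, h4⟩
    have hcS := hmem c hyc (fun h => hx4 h.symm) (fun h => ha2 h.symm) (fun h => hb1 h.symm)
    have hdS := hmem d hyd (fun h => hx5 h.symm) (fun h => ha3 h.symm) (fun h => hb2 h.symm)
    have heS := hmem e hye (fun h => hx6 h.symm) (fun h => ha4 h.symm) (fun h => hb3 h.symm)
    have hfS := hmem f hyf (fun h => hx7 h.symm) (fun h => ha5 h.symm) (fun h => hb4 h.symm)
    have hsub : ({c, d, e, f} : Finset (Fin 14)) ⊆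
        Finset.univ.filter (fun z => G14.Adj y z ∧ z ≠ x ∧ z ≠ a ∧ z ≠ b) := by
      intro z hz
      simp only [Finset.mem_insert, Finset.mem_singleton] at hz
      rcases hz with rfl | rfl | rfl | rfl <;> assumption
    have hcard : ({c, d, e, f} : Finset (Fin 14)).card = 4 := by
      rw [Finset.card_insert_of_notMem (by simp [hc1, hc2, hc3]),
        Finset.card_insert_of_notMem (by simp [hd1, hd2]),
        Finset.card_insert_of_notMem (by simp [he1]), Finset.card_singleton]
    have := Finset.card_le_card hsub
    rw [hcard] at this
    omega
  · -- edge count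
    have h := SimpleGraph.sum_degrees_eq_twice_card_edges G14
    rw [hsum] at h
    have hcard : G14.edgeFinset.card = 31 := by omega
    rw [← SimpleGraph.coe_edgeFinset, Set.ncard_coe_finset, hcard]

end S24Cert

theorem stmt_14 :
    ∃ G : SimpleGraph (Fin 14), IsPlanar G ∧ ¬ ContainsS24 G ∧
      G.edgeSet.ncard = 31 := S24Cert.main_theorem
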